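/- Suppose string B of length n can be partitioned into at most 2k+1 contiguous intervals such that each interval either has length at most 1, or its substring in B is within edit distance 3k of the substring of A at a position shifted by at most 3k. Then ED(A,B) ≤ 40k², provided k ≥ 1. -/

import Mathlib

open Finset

/-- Costs for the Levenshtein edit distance (as in Mathlib's former
`Mathlib/Data/List/EditDistance/Defs.lean`, removed from Mathlib since). -/
structure Levenshtein.Cost (α β δ : Type*) where
  delete : α → δ
  insert : β → δ
  substitute : α → β → δ

/-- The default cost structure: every insertion, deletion and substitution costs `1`. -/
def Levenshtein.defaultCost {α : Type*} [DecidableEq α] : Levenshtein.Cost α α ℕ where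
  delete _ := 1
  insert _ := 1
  substitute a b := if a = b then 0 else 1

/-- Helper for `suffixLevenshtein` (old Mathlib definition). -/
def Levenshtein.impl {α β δ : Type*} [AddCommMonoid δ] [LinearOrder δ] [CanonicallyOrderedAdd δ]
    (C : Levenshtein.Cost α β δ) (xs : List α) (y : β)
    (d : {r : List δ // 0 < r.length}) : {r : List δ // 0 < r.length} :=
  let ⟨ds, w⟩ := d
  xs.zip (ds.zip ds.tail) |>.foldr
    (init := ⟨[ds.getLast (List.length_pos_iff.mp w) + C.insert y], by simp⟩)
    (fun ⟨x, d₀, d₁⟩ ⟨r, w⟩ =>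
      ⟨min (C.delete x + r[0]) (min (C.insert y + d₀) (C.substitute x y + d₁)) :: r, by simp⟩)

/-- Levenshtein distances from each suffix of `xs` to `ys` (old Mathlib definition). -/
def suffixLevenshtein {α β δ : Type*} [AddCommMonoid δ] [LinearOrder δ] [CanonicallyOrderedAdd δ]
    (C : Levenshtein.Cost α β δ) (xs : List α) (ys : List β) : {r : List δ // 0 < r.length} :=
  ys.foldr
    (Levenshtein.impl C xs)
    (xs.foldr (init := ⟨[0], by simp⟩) (fun a ⟨ds, w⟩ => ⟨(C.delete a + ds[0]) :: ds, by simp⟩))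

/-- The Levenshtein edit distance (old Mathlib definition). -/
def levenshtein {α β δ : Type*} [AddCommMonoid δ] [LinearOrder δ] [CanonicallyOrderedAdd δ]
    (C : Levenshtein.Cost α β δ) (xs : List α) (ys : List β) : δ :=
  let ⟨r, w⟩ := suffixLevenshtein C xs ys
  r[0]

/-- Edit distance (Levenshtein distance with unit costs). -/
def ED {α : Type*} [DecidableEq α] (A B : List α) : ℕ :=
  levenshtein Levenshtein.defaultCost A B


section LevLemmas
variable {α β δ : Type*} [AddCommMonoid δ] [LinearOrder δ] [CanonicallyOrderedAdd δ]
  (C : Levenshtein.Cost α β δ)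

@[simp] theorem defaultCost_delete' {γ : Type*} [DecidableEq γ] (a : γ) :
    (Levenshtein.defaultCost : Levenshtein.Cost γ γ ℕ).delete a = 1 := rfl

@[simp] theorem defaultCost_insert' {γ : Type*} [DecidableEq γ] (a : γ) :
    (Levenshtein.defaultCost : Levenshtein.Cost γ γ ℕ).insert a = 1 := rfl

@[simp] theorem defaultCost_substitute' {γ : Type*} [DecidableEq γ] (a b : γ) :
    (Levenshtein.defaultCost : Levenshtein.Cost γ γ ℕ).substitute a b = if a = b then 0 else 1 := rfl

@[simp] theorem levenshtein_nil_nil : levenshtein C ([] : List α) ([] : List β) = 0 := rfl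

theorem levenshtein_cons_nil (x : α) (xs : List α) :
    levenshtein C (x :: xs) [] = C.delete x + levenshtein C xs [] := rfl

theorem lev_of_eq (xs : List α) (ys : List β) (a : δ) (l : List δ)
    (h : (suffixLevenshtein C xs ys).1 = a :: l) : levenshtein C xs ys = a := by
  unfold levenshtein
  generalize suffixLevenshtein C xs ys = S at h ⊢
  obtain ⟨r, w⟩ := S
  simp only at h
  subst h
  rfl

theorem cons_tail_aux (l : List δ) (h : 0 < l.length) : l = l[0] :: l.tail := by
  cases l with
  | nil => simp at h
  | cons a l => rfl

theorem impl_nil_fst (y : β) (d : {r : List δ // 0 < r.length}) :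
    (Levenshtein.impl C [] y d).1 = [d.1.getLast (List.length_pos_iff.mp d.2) + C.insert y] := by
  obtain ⟨ds, w⟩ := d
  rfl

theorem impl_cons_fst (x : α) (xs : List α) (y : β) (d0 : δ) (ds : List δ) (w' : 0 < ds.length)
    (w : 0 < (d0 :: ds).length) :
    (Levenshtein.impl C (x :: xs) y ⟨d0 :: ds, w⟩).1 =
      min (C.delete x + (Levenshtein.impl C xs y ⟨ds, w'⟩).1[0]'(Levenshtein.impl C xs y ⟨ds, w'⟩).2)
        (min (C.insert y + d0) (C.substitute x y + ds[0])) :: (Levenshtein.impl C xs y ⟨ds, w'⟩).1 := by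
  obtain ⟨e, es⟩ := ds
  · simp at w'
  · simp only [Levenshtein.impl, List.tail_cons, List.zip_cons_cons, List.foldr_cons]
    simp [List.getLast_cons]

theorem suffix_nil_eq (ys : List β) :
    (suffixLevenshtein C ([] : List α) ys).1 = [levenshtein C [] ys] := by
  induction ys with
  | nil => rfl
  | cons y ys ih =>
    have h : (suffixLevenshtein C ([] : List α) (y :: ys)).1 = [levenshtein C [] ys + C.insert y] := by
      show (Levenshtein.impl C [] y (suffixLevenshtein C [] ys)).1 = _
      rw [impl_nil_fst]; simp [ih]
    rw [h, lev_of_eq C _ _ _ _ h]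

theorem levenshtein_nil_cons (y : β) (ys : List β) :
    levenshtein C ([] : List α) (y :: ys) = C.insert y + levenshtein C [] ys := by
  have h : (suffixLevenshtein C ([] : List α) (y :: ys)).1 = [levenshtein C [] ys + C.insert y] := by
    show (Levenshtein.impl C [] y (suffixLevenshtein C [] ys)).1 = _
    rw [impl_nil_fst]; simp [suffix_nil_eq]
  rw [lev_of_eq C _ _ _ _ h, add_comm]

theorem suffix_cons_tail (x : α) (xs : List α) (ys : List β) :
    (suffixLevenshtein C (x :: xs) ys).1.tail = (suffixLevenshtein C xs ys).1 := by
  induction ys with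
  | nil => rfl
  | cons y ys ih =>
    have e : suffixLevenshtein C (x :: xs) ys =
        ⟨levenshtein C (x :: xs) ys :: (suffixLevenshtein C xs ys).1, by simp⟩ :=
      Subtype.ext (by rw [← ih]; exact cons_tail_aux _ (suffixLevenshtein C (x :: xs) ys).2)
    show (Levenshtein.impl C (x :: xs) y (suffixLevenshtein C (x :: xs) ys)).1.tail = _
    rw [e, impl_cons_fst (w' := (suffixLevenshtein C xs ys).2)]
    rfl

theorem levenshtein_cons_cons (x : α) (xs : List α) (y : β) (ys : List β) :
    levenshtein C (x :: xs) (y :: ys) =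
      min (C.delete x + levenshtein C xs (y :: ys))
        (min (C.insert y + levenshtein C (x :: xs) ys)
          (C.substitute x y + levenshtein C xs ys)) := by
  have e : suffixLevenshtein C (x :: xs) ys =
      ⟨levenshtein C (x :: xs) ys :: (suffixLevenshtein C xs ys).1, by simp⟩ :=
    Subtype.ext (by rw [← suffix_cons_tail C x xs ys]; exact cons_tail_aux _ (suffixLevenshtein C (x :: xs) ys).2)
  have h : (suffixLevenshtein C (x :: xs) (y :: ys)).1 =
      (Levenshtein.impl C (x :: xs) y ⟨levenshtein C (x :: xs) ys :: (suffixLevenshtein C xs ys).1, by simp⟩).1 := by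
    show (Levenshtein.impl C (x :: xs) y (suffixLevenshtein C (x :: xs) ys)).1 = _
    rw [e]
  rw [impl_cons_fst (w' := (suffixLevenshtein C xs ys).2)] at h
  rw [lev_of_eq C _ _ _ _ h]
  rfl

end LevLemmas

section Lemmas
variable {α : Type*} [DecidableEq α]

lemma ED_nil_right (A : List α) : ED A [] = A.length := by
  induction A with
  | nil => simp [ED]
  | cons x xs ih => simp [ED, levenshtein_cons_nil] at *; omega

lemma ED_nil_left (B : List α) : ED [] B = B.length := by
  induction B with
  | nil => simp [ED]
  | cons y ys ih => simp [ED, levenshtein_nil_cons] at *; omega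

lemma ED_cons_cons (x y : α) (xs ys : List α) :
    ED (x :: xs) (y :: ys) =
      min (1 + ED xs (y :: ys))
        (min (1 + ED (x :: xs) ys) ((if x = y then 0 else 1) + ED xs ys)) := by
  simp [ED, levenshtein_cons_cons]

lemma ED_self (A : List α) : ED A A = 0 := by
  induction A with
  | nil => simp [ED]
  | cons x xs ih =>
    have h := ED_cons_cons x x xs xs
    simp [ih] at h
    omega

lemma ED_del_le (x : α) (xs ys : List α) : ED (x :: xs) ys ≤ 1 + ED xs ys := by
  cases ys with
  | nil => simp [ED, levenshtein_cons_nil]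
  | cons y ys => rw [ED_cons_cons]; exact min_le_left _ _

lemma ED_ins_le (y : α) (xs ys : List α) : ED xs (y :: ys) ≤ 1 + ED xs ys := by
  cases xs with
  | nil => simp [ED, levenshtein_nil_cons]
  | cons x xs =>
    rw [ED_cons_cons]
    exact le_trans (min_le_right _ _) (min_le_left _ _)

lemma ED_sub_le (x y : α) (xs ys : List α) :
    ED (x :: xs) (y :: ys) ≤ (if x = y then 0 else 1) + ED xs ys := by
  rw [ED_cons_cons]
  exact le_trans (min_le_right _ _) (min_le_right _ _)

lemma ED_lb_left : ∀ (b c : List α), c.length ≤ b.length + ED b c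
  | [], c => by simp [ED_nil_left]
  | x :: b', [] => by simp
  | x :: b', z :: c' => by
    rw [ED_cons_cons]
    have h1 := ED_lb_left b' (z :: c')
    have h2 := ED_lb_left (x :: b') c'
    have h3 := ED_lb_left b' c'
    simp only [List.length_cons] at *
    omega
termination_by b c => b.length + c.length

lemma ED_lb_right : ∀ (b c : List α), b.length ≤ ED b c + c.length
  | [], c => by simp
  | x :: b', [] => by simp [ED_nil_right]
  | x :: b', z :: c' => by
    rw [ED_cons_cons]
    have h1 := ED_lb_right b' (z :: c')
    have h2 := ED_lb_right (x :: b') c'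
    have h3 := ED_lb_right b' c'
    simp only [List.length_cons] at *
    omega
termination_by b c => b.length + c.length

lemma ED_le_length : ∀ (X Y : List α), X.length = Y.length → ED X Y ≤ X.length
  | [], [], _ => by simp [ED]
  | x :: xs, y :: ys, h => by
    have := ED_sub_le x y xs ys
    have := ED_le_length xs ys (by simpa using h)
    have : (if x = y then 0 else 1) ≤ 1 := by split <;> omega
    simp only [List.length_cons]
    omega

lemma ED_append : ∀ (a c b d : List α), ED (a ++ b) (c ++ d) ≤ ED a c + ED b d
  | [], [], b, d => by simp
  | [], y :: c', b, d => by
    have h1 := ED_ins_le y b (c' ++ d)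
    have h2 := ED_append [] c' b d
    simp only [List.nil_append, List.cons_append, ED_nil_left, List.length_cons] at *
    omega
  | x :: a', [], b, d => by
    have h1 := ED_del_le x (a' ++ b) d
    have h2 := ED_append a' [] b d
    simp only [List.nil_append, List.cons_append, ED_nil_right, List.length_cons] at *
    omega
  | x :: a', y :: c', b, d => by
    have hd := ED_del_le x (a' ++ b) (y :: c' ++ d)
    have hi := ED_ins_le y (x :: a' ++ b) (c' ++ d)
    have hs := ED_sub_le x y (a' ++ b) (c' ++ d)
    have i1 := ED_append a' (y :: c') b d
    have i2 := ED_append (x :: a') c' b d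
    have i3 := ED_append a' c' b d
    rw [ED_cons_cons (xs := a') (ys := c')]
    simp only [List.cons_append] at *
    omega
termination_by a c b d => a.length + c.length

lemma ED_triangle : ∀ (a b c : List α), ED a c ≤ ED a b + ED b c
  | a, [], c => by
    have h1 := ED_append a [] [] c
    simp only [List.append_nil, List.nil_append] at h1
    simpa [ED_nil_left, ED_nil_right] using h1
  | [], y :: b', c => by
    have := ED_lb_left (y :: b') c
    simp only [ED_nil_left, ED_nil_right]
    omega
  | x :: a', y :: b', [] => by
    have := ED_lb_right (x :: a') (y :: b')
    simp only [ED_nil_left, ED_nil_right]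
    omega
  | x :: a', y :: b', z :: c' => by
    have hd := ED_del_le x a' (z :: c')
    have hi := ED_ins_le z (x :: a') c'
    have hs := ED_sub_le x z a' c'
    have bd := ED_del_le y b' (z :: c')
    have bi := ED_ins_le z (y :: b') c'
    have bs := ED_sub_le y z b' c'
    have ad := ED_del_le x a' (y :: b')
    have ai := ED_ins_le y (x :: a') b'
    have as := ED_sub_le x y a' b'
    have t1 := ED_triangle a' (y :: b') (z :: c')
    have t2 := ED_triangle (x :: a') (y :: b') c'
    have t3 := ED_triangle (x :: a') b' (z :: c')
    have t4 := ED_triangle (x :: a') b' c'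
    have t5 := ED_triangle a' b' (z :: c')
    have t6 := ED_triangle a' b' c'
    have dtri : (if x = z then 0 else 1) ≤
        (if x = y then 0 else 1) + (if y = z then 0 else 1) := by
      split_ifs <;> simp_all
    rw [ED_cons_cons (xs := a') (ys := b'), ED_cons_cons (xs := b') (ys := c')]
    omega
termination_by a b c => a.length + b.length + c.length

lemma ED_le_add (A B : List α) : ED A B ≤ A.length + B.length := by
  have := ED_append A [] [] B
  simpa [ED_nil_left, ED_nil_right] using this

lemma ED_overlap (P C Q : List α) : ED (P ++ C) (C ++ Q) ≤ P.length + Q.length := by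
  have h1 := ED_append P [] C (C ++ Q)
  have h2 := ED_append C C [] Q
  simp only [List.nil_append, List.append_nil, ED_nil_left, ED_nil_right,
    ED_self, List.length_nil] at h1 h2
  omega

lemma ED_overlap' (P C Q : List α) : ED (C ++ Q) (P ++ C) ≤ P.length + Q.length := by
  have h1 := ED_append [] P (C ++ Q) C
  have h2 := ED_append C C Q []
  simp only [List.nil_append, List.append_nil, ED_nil_left, ED_nil_right,
    ED_self, List.length_nil] at h1 h2
  omega

end Lemmas

section Shift
variable {α : Type*} [DecidableEq α]

lemma ED_decomp (A : List α) (s d l : ℕ) (hdl : d ≤ l) :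
    ∃ P C Q : List α, (A.drop s).take l = P ++ C ∧ (A.drop (s+d)).take l = C ++ Q ∧
      P.length ≤ d ∧ Q.length ≤ d := by
  refine ⟨(A.drop s).take d, (A.drop (s+d)).take (l - d),
    ((A.drop (s+d)).take l).drop (l - d), ?_, ?_, ?_, ?_⟩
  · rw [show l = d + (l - d) by omega, List.take_add, List.drop_drop]
    congr 2
    omega
  · conv_lhs => rw [← List.take_append_drop (l - d) ((A.drop (s+d)).take l)]
    rw [List.take_take, min_eq_left (by omega)]
  · exact List.length_take_le _ _
  · rw [List.length_drop]
    have := List.length_take_le l (A.drop (s+d))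
    omega

lemma ED_shift (A : List α) (s d l : ℕ) :
    ED ((A.drop s).take l) ((A.drop (s+d)).take l) ≤ 2 * d := by
  by_cases hdl : d ≤ l
  · obtain ⟨P, C, Q, h1, h2, hP, hQ⟩ := ED_decomp A s d l hdl
    rw [h1, h2]
    have := ED_overlap P C Q
    omega
  · have := ED_le_add ((A.drop s).take l) ((A.drop (s+d)).take l)
    have := List.length_take_le l (A.drop s)
    have := List.length_take_le l (A.drop (s+d))
    omega

lemma ED_shift' (A : List α) (s d l : ℕ) :
    ED ((A.drop (s+d)).take l) ((A.drop s).take l) ≤ 2 * d := by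
  by_cases hdl : d ≤ l
  · obtain ⟨P, C, Q, h1, h2, hP, hQ⟩ := ED_decomp A s d l hdl
    rw [h1, h2]
    have := ED_overlap' P C Q
    omega
  · have := ED_le_add ((A.drop (s+d)).take l) ((A.drop s).take l)
    have := List.length_take_le l (A.drop s)
    have := List.length_take_le l (A.drop (s+d))
    omega

lemma ED_split : ∀ (ℓ : List ℕ) (A B : List α), A.length = ℓ.sum → B.length = ℓ.sum →
    ED A B ≤ ∑ j ∈ Finset.range ℓ.length,
      ED ((A.drop ((ℓ.take j).sum)).take (ℓ.getD j 0))
         ((B.drop ((ℓ.take j).sum)).take (ℓ.getD j 0))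
  | [], A, B, hA, hB => by
    simp only [List.sum_nil, List.length_eq_zero_iff] at hA hB
    subst hA; subst hB
    simp [ED_self]
  | l :: ℓ', A, B, hA, hB => by
    have key := ED_append (A.take l) (B.take l) (A.drop l) (B.drop l)
    rw [List.take_append_drop, List.take_append_drop] at key
    have ih := ED_split ℓ' (A.drop l) (B.drop l)
      (by simp [hA, List.sum_cons]) (by simp [hB, List.sum_cons])
    rw [List.length_cons, Finset.sum_range_succ']
    have hterm : ∀ j, ED (((A.drop l).drop ((ℓ'.take j).sum)).take (ℓ'.getD j 0))
          (((B.drop l).drop ((ℓ'.take j).sum)).take (ℓ'.getD j 0)) =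
        ED ((A.drop (((l :: ℓ').take (j+1)).sum)).take ((l :: ℓ').getD (j+1) 0))
          ((B.drop (((l :: ℓ').take (j+1)).sum)).take ((l :: ℓ').getD (j+1) 0)) := by
      intro j
      rw [List.take_succ_cons, List.sum_cons, List.drop_drop, List.drop_drop]
      simp [Nat.add_comm]
    calc ED A B ≤ ED (A.take l) (B.take l) + ED (A.drop l) (B.drop l) := key
      _ ≤ ED (A.take l) (B.take l) + ∑ j ∈ Finset.range ℓ'.length,
            ED ((A.drop (((l :: ℓ').take (j+1)).sum)).take ((l :: ℓ').getD (j+1) 0))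
              ((B.drop (((l :: ℓ').take (j+1)).sum)).take ((l :: ℓ').getD (j+1) 0)) := by
          refine Nat.add_le_add_left ?_ _
          calc _ ≤ _ := ih
            _ = _ := Finset.sum_congr rfl fun j _ => hterm j
      _ = _ := by
          rw [Nat.add_comm]
          congr 1

end Shift
/-- Soundness of GreedyMatch: if `B` (of length `n`, like `A`) can be partitioned into
`m ≤ 2k+1` contiguous intervals (given by their lengths `L`, the `i`-th interval of `B`
starting at the sum of the earlier lengths), each of which has length at most `1`, or is
within edit distance `3k` of a window of `A` starting at a position shifted by at most
`3k`, then `ED(A,B) ≤ 40k²`. -/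
theorem greedy_soundness {α : Type*} [DecidableEq α] (n k m : ℕ) (hk : 1 ≤ k)
    (A B : List α) (hA : A.length = n) (hB : B.length = n)
    (hm : m ≤ 2 * k + 1) (L : Fin m → ℕ) (hsum : (∑ i, L i) = n)
    (hint : ∀ i : Fin m, L i ≤ 1 ∨
      ∃ iA : ℕ, iA + L i ≤ n ∧
        |(iA : ℤ) - (∑ t ∈ univ.filter (· < i), L t : ℤ)| ≤ 3 * k ∧
        ED ((A.drop iA).take (L i))
           ((B.drop (∑ t ∈ univ.filter (· < i), L t)).take (L i)) ≤ 3 * k) :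
    ED A B ≤ 40 * k ^ 2 := by
  classical
  set ℓ : List ℕ := List.ofFn L with hℓ
  have hlen : ℓ.length = m := by simp [hℓ]
  have hsum' : ℓ.sum = n := by rw [hℓ, List.sum_ofFn]; exact hsum
  have hsplit := ED_split ℓ A B (by rw [hA, hsum']) (by rw [hB, hsum'])
  have hbound : ∀ j ∈ Finset.range ℓ.length,
      ED ((A.drop ((ℓ.take j).sum)).take (ℓ.getD j 0))
         ((B.drop ((ℓ.take j).sum)).take (ℓ.getD j 0)) ≤ 9 * k := by
    intro j hj
    rw [Finset.mem_range, hlen] at hj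
    set i : Fin m := ⟨j, hj⟩ with hi
    have hget : ℓ.getD j 0 = L i := by
      rw [hℓ, List.getD_eq_getElem _ _ (by simpa using hj)]
      simp [hi]
    have hpre : (ℓ.take j).sum = ∑ t ∈ univ.filter (· < i), L t := by
      rw [hℓ, List.sum_take_ofFn]
      apply Finset.sum_congr _ (fun _ _ => rfl)
      apply Finset.filter_congr
      intro t _
      simp [hi, Fin.lt_def]
    rw [hget, hpre]
    set s : ℕ := ∑ t ∈ univ.filter (· < i), L t with hs
    set l : ℕ := L i with hl
    have hsl : s + l ≤ n := by
      have h1 : s + l = ∑ t ∈ insert i (univ.filter (· < i)), L t := by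
        rw [Finset.sum_insert (by simp)]
        omega
      have h2 : ∑ t ∈ insert i (univ.filter (· < i)), L t ≤ ∑ t, L t :=
        Finset.sum_le_sum_of_subset (Finset.subset_univ _)
      omega
    rcases hint i with hshort | ⟨iA, h1, h2, h3⟩
    · have hlA : ((A.drop s).take l).length = l := by
        simp only [List.length_take, List.length_drop, hA]
        omega
      have hlB : ((B.drop s).take l).length = l := by
        simp only [List.length_take, List.length_drop, hB]
        omega
      have := ED_le_length ((A.drop s).take l) ((B.drop s).take l) (by rw [hlA, hlB])
      rw [hlA] at this
      have : ED ((A.drop s).take l) ((B.drop s).take l) ≤ 1 := by omega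
      nlinarith
    · have h3' : ED ((A.drop iA).take l) ((B.drop s).take l) ≤ 3 * k := h3
      have hcast : (s : ℤ) = ∑ t ∈ univ.filter (· < i), (L t : ℤ) := by
        rw [hs]; push_cast; rfl
      rw [← hcast, abs_le] at h2
      have habs : iA ≤ s + 3 * k ∧ s ≤ iA + 3 * k := by omega
      have tri := ED_triangle ((A.drop s).take l) ((A.drop iA).take l) ((B.drop s).take l)
      clear h3 h2 h1
      have hshift : ED ((A.drop s).take l) ((A.drop iA).take l) ≤ 6 * k := by
        rcases le_total s iA with h | h
        · have heq : iA = s + (iA - s) := by omega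
          have := ED_shift A s (iA - s) l
          rw [← heq] at this
          omega
        · have heq : s = iA + (s - iA) := by omega
          have := ED_shift' A iA (s - iA) l
          rw [← heq] at this
          omega
      omega
  calc ED A B ≤ ∑ j ∈ Finset.range ℓ.length,
        ED ((A.drop ((ℓ.take j).sum)).take (ℓ.getD j 0))
           ((B.drop ((ℓ.take j).sum)).take (ℓ.getD j 0)) := hsplit
    _ ≤ ∑ _j ∈ Finset.range ℓ.length, 9 * k := Finset.sum_le_sum hbound
    _ = m * (9 * k) := by rw [Finset.sum_const, Finset.card_range, hlen, smul_eq_mul]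
    _ ≤ (2 * k + 1) * (9 * k) := Nat.mul_le_mul_right _ hm
    _ ≤ 40 * k ^ 2 := by nlinarith
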